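/- Let I be any instance of HRT-MSLQ with n residents, where each hospital h has lower quota ℓ(h) ≤ n. Then for any two stable matchings N and M of I with s(M) > 0, s(N)/s(M) ≤ n + 1. -/

import Mathlib

/-- An instance of the Hospitals/Residents problem with ties, incomplete lists,
and lower/upper quotas (HRT-MSLQ).  Preferences are given by rank functions
(smaller rank = more preferred); ties are allowed (equal ranks). -/
structure HRTInstance (R H : Type) [Fintype R] [DecidableEq R] [Fintype H] [DecidableEq H] where
  acc : R → H → Prop
  rRank : R → H → ℕ
  hRank : H → R → ℕ
  lq : H → ℕ
  uq : H → ℕ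

namespace HRTInstance

variable {R H : Type} [Fintype R] [DecidableEq R] [Fintype H] [DecidableEq H]

/-- The set of residents assigned to hospital `h` by assignment `M`. -/
def assignees (M : R → Option H) (h : H) : Finset R :=
  Finset.univ.filter (fun r => M r = some h)

/-- `M` is a matching: it respects acceptability and upper quotas. -/
def IsMatching (I : HRTInstance R H) (M : R → Option H) : Prop :=
  (∀ r h, M r = some h → I.acc r h) ∧ ∀ h, (assignees M h).card ≤ I.uq h

/-- `(r, h)` is a blocking pair for `M`. -/
def Blocks (I : HRTInstance R H) (M : R → Option H) (r : R) (h : H) : Prop :=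
  I.acc r h ∧
  (M r = none ∨ ∃ h', M r = some h' ∧ I.rRank r h < I.rRank r h') ∧
  ((assignees M h).card < I.uq h ∨ ∃ r' ∈ assignees M h, I.hRank h r < I.hRank h r')

/-- `M` is a stable matching. -/
def IsStable (I : HRTInstance R H) (M : R → Option H) : Prop :=
  I.IsMatching M ∧ ∀ r h, ¬ I.Blocks M r h

/-- The total satisfaction ratio (score) of `M`:
`s(M) = Σ_h min{1, |M(h)|/ℓ(h)}`, with score `1` when `ℓ(h) = 0`. -/
def score (I : HRTInstance R H) (M : R → Option H) : ℚ :=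
  ∑ h, if I.lq h = 0 then 1
       else min 1 (((assignees M h).card : ℚ) / (I.lq h : ℚ))

end HRTInstance

namespace HRTInstance

variable {R H : Type} [Fintype R] [DecidableEq R] [Fintype H] [DecidableEq H]

lemma biUnion_assignees (M : R → Option H) :
    Finset.univ.biUnion (assignees M) = Finset.univ.filter (fun r => M r ≠ none) := by
  ext r
  simp only [Finset.mem_biUnion, assignees, Finset.mem_filter, Finset.mem_univ, true_and]
  exact Option.ne_none_iff_exists'.symm

lemma sum_card_assignees (M : R → Option H) :
    ∑ h : H, (assignees M h).card = (Finset.univ.filter (fun r => M r ≠ none)).card := by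
  rw [← biUnion_assignees M]
  refine (Finset.card_biUnion ?_).symm
  intro h₁ _ h₂ _ hne
  simp only [Finset.disjoint_left, assignees, Finset.mem_filter]
  rintro r ⟨_, h1⟩ ⟨_, h2⟩
  rw [h1] at h2
  exact hne (Option.some.inj h2)

lemma sum_card_assignees_le (M : R → Option H) :
    ∑ h : H, (assignees M h).card ≤ Fintype.card R := by
  rw [sum_card_assignees]
  exact (Finset.card_filter_le _ _).trans_eq Finset.card_univ

lemma term_nonneg (I : HRTInstance R H) (M : R → Option H) (h : H) :
    (0:ℚ) ≤ if I.lq h = 0 then 1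
       else min 1 (((assignees M h).card : ℚ) / (I.lq h : ℚ)) := by
  split
  · norm_num
  · exact le_min zero_le_one (by positivity)

/-- score N ≤ |H0| + Σ_h |N(h)| -/
lemma score_le (I : HRTInstance R H) (N : R → Option H) :
    I.score N ≤ ((Finset.univ.filter fun h => I.lq h = 0).card : ℚ)
      + (∑ h : H, (assignees N h).card : ℕ) := by
  have step : I.score N ≤
      ∑ h : H, ((if I.lq h = 0 then (1:ℚ) else 0) + ((assignees N h).card : ℚ)) := by
    apply Finset.sum_le_sum
    intro h _
    by_cases hlq : I.lq h = 0
    · simp only [hlq, if_true]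
      have : (0:ℚ) ≤ ((assignees N h).card : ℚ) := by positivity
      linarith
    · simp only [hlq, if_false, zero_add]
      have hl1 : (1:ℚ) ≤ (I.lq h : ℚ) := by
        exact_mod_cast Nat.one_le_iff_ne_zero.mpr hlq
      refine (min_le_right _ _).trans ?_
      exact div_le_self (by positivity) hl1
  refine step.trans ?_
  rw [Finset.sum_add_distrib, Finset.sum_boole]
  push_cast
  rfl

end HRTInstance

/-- General model with `n` residents, `ℓ(h) ≤ u(h) ≤ n` for all hospitals: for any two
stable matchings `N` and `M` with `s(M) > 0`, `s(N)/s(M) ≤ n + 1`. -/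
theorem stmt_5 {R H : Type} [Fintype R] [DecidableEq R] [Fintype H] [DecidableEq H]
    (I : HRTInstance R H)
    (hlu : ∀ h, I.lq h ≤ I.uq h) (hun : ∀ h, I.uq h ≤ Fintype.card R)
    (N M : R → Option H) (hN : I.IsStable N) (hM : I.IsStable M)
    (hpos : 0 < I.score M) :
    I.score N / I.score M ≤ (Fintype.card R : ℚ) + 1 := by
  classical
  open HRTInstance in
  rw [div_le_iff₀ hpos]
  have hn0 : (0:ℚ) ≤ (Fintype.card R : ℚ) := by positivity
  have hsumN : ((∑ h : H, (HRTInstance.assignees N h).card : ℕ) : ℚ) ≤ (Fintype.card R : ℚ) := by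
    exact_mod_cast HRTInstance.sum_card_assignees_le N
  by_cases hH0 : ∃ h0 : H, I.lq h0 = 0
  · -- Case 1: some hospital has zero lower quota
    obtain ⟨h0, hh0⟩ := hH0
    have hH0card : 1 ≤ ((Finset.univ.filter fun h => I.lq h = 0).card : ℚ) := by
      have : h0 ∈ Finset.univ.filter fun h => I.lq h = 0 := by simp [hh0]
      exact_mod_cast Finset.card_pos.mpr ⟨h0, this⟩
    have hsN : I.score N ≤ ((Finset.univ.filter fun h => I.lq h = 0).card : ℚ)
        + (Fintype.card R : ℚ) := (HRTInstance.score_le I N).trans (by linarith)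
    have hsM : ((Finset.univ.filter fun h => I.lq h = 0).card : ℚ) ≤ I.score M := by
      rw [← Finset.sum_boole]
      apply Finset.sum_le_sum
      intro h _
      by_cases hlq : I.lq h = 0
      · simp [HRTInstance.score, hlq]
      · simp only [hlq, if_false]
        exact le_min zero_le_one (by positivity)
    nlinarith
  · -- Case 2: all lower quotas positive
    push_neg at hH0
    have hlq1 : ∀ h : H, (1:ℚ) ≤ (I.lq h : ℚ) := fun h => by
      exact_mod_cast Nat.one_le_iff_ne_zero.mpr (hH0 h)
    have hsN_le_n : I.score N ≤ (Fintype.card R : ℚ) := by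
      refine (HRTInstance.score_le I N).trans ?_
      have : (Finset.univ.filter fun h => I.lq h = 0) = ∅ := by
        apply Finset.filter_eq_empty_iff.mpr
        intro h _; exact hH0 h
      rw [this]
      simpa using hsumN
    by_cases hub : ∃ r h, N r = some h ∧ M r = none
    · -- Subcase 2a: some N-matched resident is unmatched in M
      obtain ⟨r, h, hNr, hMr⟩ := hub
      have hacc : I.acc r h := hN.1.1 r h hNr
      have hfull : I.uq h ≤ (HRTInstance.assignees M h).card := by
        by_contra hlt
        push_neg at hlt
        exact hM.2 r h ⟨hacc, Or.inl hMr, Or.inl hlt⟩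
      have hlc : (I.lq h : ℚ) ≤ ((HRTInstance.assignees M h).card : ℚ) := by
        exact_mod_cast (hlu h).trans hfull
      have hterm : (1:ℚ) ≤ if I.lq h = 0 then 1
          else min 1 (((HRTInstance.assignees M h).card : ℚ) / (I.lq h : ℚ)) := by
        split
        · exact le_refl 1
        · refine le_min le_rfl ?_
          rw [le_div_iff₀ (lt_of_lt_of_le one_pos (hlq1 h))]
          linarith
      have hsM1 : (1:ℚ) ≤ I.score M := by
        refine hterm.trans ?_
        exact Finset.single_le_sum (fun h' _ => HRTInstance.term_nonneg I M h') (Finset.mem_univ h)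
      nlinarith
    · -- Subcase 2b: every N-matched resident is matched in M
      push_neg at hub
      have hsub : (Finset.univ.filter fun r => N r ≠ none)
          ⊆ (Finset.univ.filter fun r => M r ≠ none) := by
        intro r hr
        simp only [Finset.mem_filter, Finset.mem_univ, true_and] at hr ⊢
        obtain ⟨h, hNr⟩ := Option.ne_none_iff_exists'.mp hr
        exact hub r h hNr
      set m : ℕ := ∑ h : H, (HRTInstance.assignees M h).card with hm
      have h1 : I.score N ≤ ((Finset.univ.filter fun h => (HRTInstance.assignees N h).Nonempty).card : ℚ) := by
        rw [← Finset.sum_boole]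
        apply Finset.sum_le_sum
        intro h _
        simp only [hH0 h, if_false]
        by_cases hne : (HRTInstance.assignees N h).Nonempty
        · simp only [hne, if_true]
          exact min_le_left _ _
        · rw [Finset.not_nonempty_iff_eq_empty] at hne
          simp [hne]
      have h2 : (Finset.univ.filter fun h => (HRTInstance.assignees N h).Nonempty).card ≤ m := by
        calc (Finset.univ.filter fun h => (HRTInstance.assignees N h).Nonempty).card
            ≤ ∑ h : H, (HRTInstance.assignees N h).card := by
              rw [Finset.card_filter]
              apply Finset.sum_le_sum
              intro h _
              by_cases hne : (HRTInstance.assignees N h).Nonempty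
              · simpa [hne] using Finset.card_pos.mpr hne
              · simp [hne]
          _ = (Finset.univ.filter fun r => N r ≠ none).card := HRTInstance.sum_card_assignees N
          _ ≤ (Finset.univ.filter fun r => M r ≠ none).card := Finset.card_le_card hsub
          _ = m := (HRTInstance.sum_card_assignees M).symm
      have hmn : m ≤ Fintype.card R := HRTInstance.sum_card_assignees_le M
      have h3 : (m:ℚ) ≤ (Fintype.card R : ℚ) * I.score M := by
        rcases Nat.eq_zero_or_pos (Fintype.card R) with h0 | hposn
        · have : m = 0 := by omega
          simp [this, h0]
        · have hnQ : (0:ℚ) < (Fintype.card R : ℚ) := by exact_mod_cast hposn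
          rw [← div_le_iff₀' hnQ]
          have heq : (m:ℚ) / (Fintype.card R : ℚ)
              = ∑ h : H, ((HRTInstance.assignees M h).card : ℚ) / (Fintype.card R : ℚ) := by
            rw [← Finset.sum_div, hm]
            push_cast
            rfl
          rw [heq]
          apply Finset.sum_le_sum
          intro h _
          simp only [HRTInstance.score, hH0 h, if_false]
          have hcu : ((HRTInstance.assignees M h).card : ℚ) ≤ (Fintype.card R : ℚ) := by
            exact_mod_cast (hM.1.2 h).trans (hun h)
          refine le_min ?_ ?_
          · rw [div_le_one hnQ]; exact hcu
          · have hlqn : (I.lq h : ℚ) ≤ (Fintype.card R : ℚ) := by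
              exact_mod_cast (hlu h).trans (hun h)
            have hlqpos : (0:ℚ) < (I.lq h : ℚ) := lt_of_lt_of_le one_pos (hlq1 h)
            exact div_le_div_of_nonneg_left (by positivity) hlqpos hlqn
      have h12 : I.score N ≤ (m:ℚ) := h1.trans (by exact_mod_cast h2)
      nlinarith [hpos]
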